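/- Let 0 < α₂ < 1, s ∈ (0,1), and set s₂ᵏ = s/(k+1)^{α₂}. For every integer k ≥ 1 satisfying k/(k+1)^{α₂} ≥ (ln s + (1+α₂) ln k)/s, one has ∑_{r=0}^{k−1} (s₂ʳ)² ∏_{t=r}^{k−1} (1 − s₂^{t+1})² ≤ 9 s / k^{α₂}. -/

import Mathlib

open Finset Real

theorem variance_sum_bound (α₂ s : ℝ) (hα : α₂ ∈ Set.Ioo (0:ℝ) 1)
    (hs : s ∈ Set.Ioo (0:ℝ) 1) (k : ℕ) (hk : 1 ≤ k)
    (hcond : (Real.log s + (1 + α₂) * Real.log k) / s ≤ (k : ℝ) / ((k : ℝ) + 1) ^ α₂) :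
    ∑ r ∈ Finset.range k, (s / ((r : ℝ) + 1) ^ α₂) ^ 2 *
        ∏ t ∈ Finset.Ico r k, (1 - s / ((t : ℝ) + 2) ^ α₂) ^ 2
      ≤ 9 * s / (k : ℝ) ^ α₂ := by
  obtain ⟨hα0, hα1⟩ := hα
  obtain ⟨hs0, hs1⟩ := hs
  have kpos : (0:ℝ) < (k:ℝ) := by exact_mod_cast Nat.pos_of_ne_zero (by omega)
  have kone : (1:ℝ) ≤ (k:ℝ) := by exact_mod_cast hk
  set K : ℝ := (k:ℝ) ^ α₂ with hK
  have hKpos : 0 < K := Real.rpow_pos_of_pos kpos _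
  set c : ℝ := s / ((k:ℝ) + 1) ^ α₂ with hc
  have hB1 : (1:ℝ) ≤ ((k:ℝ) + 1) ^ α₂ := Real.one_le_rpow (by linarith) hα0.le
  have hBpos : (0:ℝ) < ((k:ℝ) + 1) ^ α₂ := by positivity
  have hc0 : 0 < c := div_pos hs0 hBpos
  have hcs : c ≤ s := div_le_self hs0.le hB1
  have hc1 : c < 1 := lt_of_le_of_lt hcs hs1
  have h1c0 : (0:ℝ) ≤ 1 - c := by linarith
  have h1c1 : (1:ℝ) - c ≤ 1 := by linarith
  have h2a : (2:ℝ)^α₂ ≤ 2 := by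
    calc (2:ℝ)^α₂ ≤ (2:ℝ)^(1:ℝ) := Real.rpow_le_rpow_of_exponent_le one_le_two hα1.le
      _ = 2 := Real.rpow_one 2
  -- termwise product bound
  have step1 : ∀ r ∈ Finset.range k,
      (s / ((r:ℝ)+1)^α₂)^2 * ∏ t ∈ Finset.Ico r k, (1 - s/((t:ℝ)+2)^α₂)^2
        ≤ (s / ((r:ℝ)+1)^α₂)^2 * (1-c)^(2*(k-r)) := by
    intro r _
    apply mul_le_mul_of_nonneg_left _ (sq_nonneg _)
    calc ∏ t ∈ Finset.Ico r k, (1 - s/((t:ℝ)+2)^α₂)^2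
        ≤ ∏ _t ∈ Finset.Ico r k, (1-c)^2 := by
          apply Finset.prod_le_prod (fun t _ => sq_nonneg _)
          intro t ht
          have ht' : t < k := (Finset.mem_Ico.mp ht).2
          have h1 : (1:ℝ) ≤ ((t:ℝ) + 2) ^ α₂ :=
            Real.one_le_rpow (by have := Nat.cast_nonneg (α := ℝ) t; linarith) hα0.le
          have h2 : ((t:ℝ) + 2) ^ α₂ ≤ ((k:ℝ) + 1) ^ α₂ := by
            apply Real.rpow_le_rpow (by positivity) ?_ hα0.le
            have : (t:ℝ) + 1 ≤ (k:ℝ) := by exact_mod_cast Nat.succ_le_of_lt ht'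
            linarith
          have hcle : c ≤ s/((t:ℝ)+2)^α₂ := by
            rw [hc]; gcongr
          have hle : s/((t:ℝ)+2)^α₂ ≤ s := div_le_self hs0.le h1
          have h0 : 0 ≤ 1 - s/((t:ℝ)+2)^α₂ := by linarith
          exact pow_le_pow_left₀ h0 (by linarith) 2
      _ = (1-c)^(2*(k-r)) := by
          rw [Finset.prod_const, Nat.card_Ico, ← pow_mul]
  set m := k / 2 with hm
  have hmk : m ≤ k := Nat.div_le_self k 2
  -- exponential bound on (1-c)^k
  have hpow : (1-c)^k ≤ s⁻¹ * (k:ℝ) ^ (-(1+α₂)) := by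
    have h1 : (1-c)^k ≤ Real.exp (-((k:ℝ)*c)) := by
      calc (1-c)^k ≤ (Real.exp (-c))^k :=
            pow_le_pow_left₀ h1c0 (by linarith [Real.add_one_le_exp (-c)]) k
        _ = Real.exp (-((k:ℝ)*c)) := by
            rw [← Real.exp_nat_mul]; ring_nf
    have h2 : Real.log s + (1+α₂)*Real.log (k:ℝ) ≤ (k:ℝ) * c := by
      have h := (div_le_iff₀ hs0).mp hcond
      calc Real.log s + (1+α₂)*Real.log (k:ℝ)
          ≤ ((k:ℝ)/((k:ℝ)+1)^α₂) * s := h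
        _ = (k:ℝ) * c := by rw [hc]; ring
    have h3 : Real.exp (-((k:ℝ)*c))
        ≤ Real.exp (-(Real.log s + (1+α₂)*Real.log (k:ℝ))) :=
      Real.exp_le_exp.mpr (by linarith)
    have h4 : Real.exp (-(Real.log s + (1+α₂)*Real.log (k:ℝ)))
        = s⁻¹ * (k:ℝ)^(-(1+α₂)) := by
      rw [neg_add, Real.exp_add, Real.exp_neg, Real.exp_log hs0,
        Real.rpow_def_of_pos kpos]
      congr 2
      ring
    linarith
  -- early part
  have hearly : ∑ r ∈ Finset.Ico 0 m, (s/((r:ℝ)+1)^α₂)^2 * (1-c)^(2*(k-r)) ≤ s / K := by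
    have hterm : ∀ r ∈ Finset.Ico 0 m,
        (s/((r:ℝ)+1)^α₂)^2 * (1-c)^(2*(k-r)) ≤ s^2 * (1-c)^k := by
      intro r hr
      have hrm : r < m := (Finset.mem_Ico.mp hr).2
      have hb : (1:ℝ) ≤ ((r:ℝ)+1)^α₂ := Real.one_le_rpow (by have := Nat.cast_nonneg (α := ℝ) r; linarith) hα0.le
      have hle : s/((r:ℝ)+1)^α₂ ≤ s := div_le_self hs0.le hb
      have h0 : 0 ≤ s/((r:ℝ)+1)^α₂ := by positivity
      have h1 : (s/((r:ℝ)+1)^α₂)^2 ≤ s^2 := pow_le_pow_left₀ h0 hle 2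
      have h2 : (1-c)^(2*(k-r)) ≤ (1-c)^k :=
        pow_le_pow_of_le_one h1c0 h1c1 (by omega)
      exact mul_le_mul h1 h2 (pow_nonneg h1c0 _) (sq_nonneg s)
    have hkk : (k:ℝ) * (k:ℝ)^(-(1+α₂)) = K⁻¹ := by
      have h5 : (k:ℝ) * (k:ℝ)^(-(1+α₂)) = (k:ℝ)^((1:ℝ) + -(1+α₂)) := by
        rw [Real.rpow_add kpos, Real.rpow_one]
      rw [h5, show ((1:ℝ) + -(1+α₂)) = -α₂ by ring, Real.rpow_neg kpos.le, hK]
    calc ∑ r ∈ Finset.Ico 0 m, (s/((r:ℝ)+1)^α₂)^2 * (1-c)^(2*(k-r))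
        ≤ ∑ _r ∈ Finset.Ico 0 m, s^2*(1-c)^k := Finset.sum_le_sum hterm
      _ = (m:ℝ) * (s^2 * (1-c)^k) := by
          rw [Finset.sum_const, Nat.card_Ico, Nat.sub_zero, nsmul_eq_mul]
      _ ≤ (k:ℝ) * (s^2 * (1-c)^k) := by
          apply mul_le_mul_of_nonneg_right (by exact_mod_cast hmk)
            (mul_nonneg (sq_nonneg s) (pow_nonneg h1c0 k))
      _ ≤ (k:ℝ) * (s^2 * (s⁻¹ * (k:ℝ)^(-(1+α₂)))) := by
          apply mul_le_mul_of_nonneg_left _ kpos.le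
          exact mul_le_mul_of_nonneg_left hpow (sq_nonneg s)
      _ = s * ((k:ℝ) * (k:ℝ)^(-(1+α₂))) := by
          field_simp
      _ = s / K := by rw [hkk, div_eq_mul_inv]
  -- geometric sum bound
  have hgeo : ∑ r ∈ Finset.Ico m k, (1-c)^(k-r) ≤ 1/c := by
    have hsub : Finset.Ico m k ⊆ Finset.range k := by
      rw [Finset.range_eq_Ico]; exact Finset.Ico_subset_Ico (Nat.zero_le m) le_rfl
    have h1 : ∑ r ∈ Finset.Ico m k, (1-c)^(k-r) ≤ ∑ r ∈ Finset.range k, (1-c)^(k-r) :=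
      Finset.sum_le_sum_of_subset_of_nonneg hsub (fun i _ _ => pow_nonneg h1c0 _)
    have h2 : ∑ r ∈ Finset.range k, (1-c)^(k-r) = ∑ j ∈ Finset.range k, (1-c)^(j+1) := by
      rw [← Finset.sum_range_reflect (fun j => (1-c)^(j+1)) k]
      apply Finset.sum_congr rfl
      intro j hj
      have : j < k := Finset.mem_range.mp hj
      congr 1
      omega
    have h3 : ∑ j ∈ Finset.range k, (1-c)^(j+1)
        = (1-c) * ∑ j ∈ Finset.range k, (1-c)^j := by
      rw [Finset.mul_sum]
      exact Finset.sum_congr rfl fun j _ => by ring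
    have h4 : ∑ j ∈ Finset.range k, (1-c)^j ≤ 1/c := by
      have hne : (1-c) ≠ 1 := by intro h; rw [sub_eq_self] at h; exact hc0.ne' h
      rw [geom_sum_eq hne]
      have heq : ((1-c)^k - 1)/((1-c)-1) = (1 - (1-c)^k)/c := by
        rw [show (1-c)-1 = -c by ring, div_neg,
          show (1 - (1-c)^k) = -((1-c)^k - 1) by ring, neg_div]
      rw [heq]
      apply (div_le_div_iff_of_pos_right hc0).mpr
      nlinarith [pow_nonneg h1c0 k]
    have hXnn : (0:ℝ) ≤ ∑ j ∈ Finset.range k, (1-c)^j :=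
      Finset.sum_nonneg fun j _ => pow_nonneg h1c0 _
    calc ∑ r ∈ Finset.Ico m k, (1-c)^(k-r)
        ≤ ∑ r ∈ Finset.range k, (1-c)^(k-r) := h1
      _ = (1-c) * ∑ j ∈ Finset.range k, (1-c)^j := by rw [h2, h3]
      _ ≤ ∑ j ∈ Finset.range k, (1-c)^j := mul_le_of_le_one_left hXnn h1c1
      _ ≤ 1/c := h4
  -- late part
  have hlate : ∑ r ∈ Finset.Ico m k, (s/((r:ℝ)+1)^α₂)^2 * (1-c)^(2*(k-r)) ≤ 8 * s / K := by
    have hterm : ∀ r ∈ Finset.Ico m k,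
        (s/((r:ℝ)+1)^α₂)^2 * (1-c)^(2*(k-r)) ≤ (2*s/K)^2 * (1-c)^(k-r) := by
      intro r hr
      have hmr : m ≤ r := (Finset.mem_Ico.mp hr).1
      have hr2n : k ≤ 2*(r+1) := by omega
      have hr2 : (k:ℝ) ≤ 2*((r:ℝ)+1) := by exact_mod_cast hr2n
      have hhalf : (k:ℝ)/2 ≤ (r:ℝ)+1 := by linarith
      have h1 : ((k:ℝ)/2)^α₂ ≤ ((r:ℝ)+1)^α₂ :=
        Real.rpow_le_rpow (by positivity) hhalf hα0.le
      have h2 : K/2 ≤ ((k:ℝ)/2)^α₂ := by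
        rw [Real.div_rpow kpos.le (by norm_num : (0:ℝ) ≤ 2), ← hK]
        gcongr
      have hKr : K/2 ≤ ((r:ℝ)+1)^α₂ := le_trans h2 h1
      have hK2pos : (0:ℝ) < K/2 := by positivity
      have hdle : s/((r:ℝ)+1)^α₂ ≤ 2*s/K := by
        calc s/((r:ℝ)+1)^α₂ ≤ s/(K/2) := by gcongr
          _ = 2*s/K := by rw [div_div_eq_mul_div]; ring
      have hsq : (s/((r:ℝ)+1)^α₂)^2 ≤ (2*s/K)^2 :=
        pow_le_pow_left₀ (by positivity) hdle 2
      have hp : (1-c)^(2*(k-r)) ≤ (1-c)^(k-r) :=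
        pow_le_pow_of_le_one h1c0 h1c1 (by omega)
      exact mul_le_mul hsq hp (pow_nonneg h1c0 _) (by positivity)
    have hB2 : ((k:ℝ)+1)^α₂ ≤ 2*K := by
      calc ((k:ℝ)+1)^α₂ ≤ (2*(k:ℝ))^α₂ :=
            Real.rpow_le_rpow (by linarith) (by linarith) hα0.le
        _ = 2^α₂ * K := by rw [Real.mul_rpow (by norm_num) kpos.le, hK]
        _ ≤ 2*K := mul_le_mul_of_nonneg_right h2a hKpos.le
    have hfin : (2*s/K)^2 * (1/c) ≤ 8 * s / K := by
      have heq : (2*s/K)^2 * (1/c) = 4*s*(((k:ℝ)+1)^α₂)/K^2 := by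
        rw [hc, one_div_div]
        field_simp
        ring
      rw [heq]
      calc 4*s*(((k:ℝ)+1)^α₂)/K^2 ≤ 4*s*(2*K)/K^2 := by gcongr
        _ = 8*s/K := by field_simp; ring
    calc ∑ r ∈ Finset.Ico m k, (s/((r:ℝ)+1)^α₂)^2 * (1-c)^(2*(k-r))
        ≤ ∑ r ∈ Finset.Ico m k, (2*s/K)^2 * (1-c)^(k-r) := Finset.sum_le_sum hterm
      _ = (2*s/K)^2 * ∑ r ∈ Finset.Ico m k, (1-c)^(k-r) := by rw [← Finset.mul_sum]
      _ ≤ (2*s/K)^2 * (1/c) := mul_le_mul_of_nonneg_left hgeo (by positivity)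
      _ ≤ 8 * s / K := hfin
  calc ∑ r ∈ Finset.range k, (s / ((r : ℝ) + 1) ^ α₂) ^ 2 *
        ∏ t ∈ Finset.Ico r k, (1 - s / ((t : ℝ) + 2) ^ α₂) ^ 2
      ≤ ∑ r ∈ Finset.range k, (s/((r:ℝ)+1)^α₂)^2 * (1-c)^(2*(k-r)) :=
        Finset.sum_le_sum step1
    _ = (∑ r ∈ Finset.Ico 0 m, (s/((r:ℝ)+1)^α₂)^2 * (1-c)^(2*(k-r)))
        + ∑ r ∈ Finset.Ico m k, (s/((r:ℝ)+1)^α₂)^2 * (1-c)^(2*(k-r)) := by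
        rw [Finset.range_eq_Ico, ← Finset.sum_Ico_consecutive _ (Nat.zero_le m) hmk]
    _ ≤ s/K + 8*s/K := add_le_add hearly hlate
    _ = 9 * s / K := by ring
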